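/- Let G : ℝ² → Sym₂(ℝ) be α-Hölder continuous (0 < α ≤ 1) with values in positive-definite symmetric matrices with uniform eigenvalue bounds, and set L(u, x) = ⟨x, G(u) x⟩^{-3/2}. Then with β = 3α/4 there is a constant C such that |L(v, v-w) - L(u, v-w)| ≤ C |u - v|^β / |v - w|³ for all u, v, w ∈ ℝ² with v ≠ w. -/

import Mathlib

lemma quad_diff_bound (a b c d K y0 y1 : ℝ) (ha : |a| ≤ K) (hb : |b| ≤ K)
    (hc : |c| ≤ K) (hd : |d| ≤ K) :
    |a * y0 * y0 + b * y0 * y1 + (c * y1 * y0 + d * y1 * y1)| ≤ 2 * K * (y0 ^ 2 + y1 ^ 2) := by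
  have hK : 0 ≤ K := (abs_nonneg a).trans ha
  obtain ⟨a1, a2⟩ := abs_le.1 ha
  obtain ⟨b1, b2⟩ := abs_le.1 hb
  obtain ⟨c1, c2⟩ := abs_le.1 hc
  obtain ⟨d1, d2⟩ := abs_le.1 hd
  rw [abs_le]
  constructor <;>
    nlinarith [sq_nonneg (y0 + y1), sq_nonneg (y0 - y1), sq_nonneg y0, sq_nonneg y1]

lemma inv_cube_diff (r s t : ℝ) (hr : 0 < r) (hs : r ≤ s) (ht : r ≤ t) :
    |(s^3)⁻¹ - (t^3)⁻¹| ≤ 3 / r^5 * |s^2 - t^2| := by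
  wlog h : s ≤ t generalizing s t
  · rw [abs_sub_comm, abs_sub_comm (s^2)]; exact this t s ht hs (le_of_not_ge h)
  have hs0 : 0 < s := hr.trans_le hs
  have ht0 : 0 < t := hr.trans_le ht
  have hd : 0 ≤ t - s := sub_nonneg.2 h
  have hcube : s^3 ≤ t^3 := pow_le_pow_left₀ hs0.le h 3
  have hsq : s^2 ≤ t^2 := pow_le_pow_left₀ hs0.le h 2
  have h1 : (t^3)⁻¹ ≤ (s^3)⁻¹ := inv_anti₀ (by positivity) hcube
  rw [abs_of_nonneg (by linarith), abs_of_nonpos (by linarith)]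
  have key : (s^3)⁻¹ - (t^3)⁻¹ = (t^3 - s^3)/(s^3*t^3) := by field_simp
  have step1 : t^3 - s^3 ≤ 3*(t-s)*t^2 := by
    nlinarith [mul_nonneg (mul_nonneg hd hd) (by positivity : (0:ℝ) ≤ 2*t+s)]
  have step2 : (t-s)*t ≤ t^2 - s^2 := by nlinarith [mul_nonneg hd hs0.le]
  have step3 : r^5 * t^2 ≤ s^3 * t^4 := by
    have : r^3 * r^2 ≤ s^3 * t^2 :=
      mul_le_mul (pow_le_pow_left₀ hr.le hs 3) (pow_le_pow_left₀ hr.le ht 2)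
        (by positivity) (by positivity)
    nlinarith [sq_nonneg t, this, mul_le_mul_of_nonneg_right this (sq_nonneg t)]
  have main : (t^3 - s^3) * r^5 ≤ (3 * -(s^2 - t^2)) * (s^3*t^3) :=
    calc (t^3 - s^3) * r^5 ≤ (3*(t-s)*t^2) * r^5 := mul_le_mul_of_nonneg_right step1 (by positivity)
      _ = 3*(t-s)*(r^5*t^2) := by ring
      _ ≤ 3*(t-s)*(s^3*t^4) := mul_le_mul_of_nonneg_left step3 (by positivity)
      _ = (3*((t-s)*t))*(s^3*t^3) := by ring
      _ ≤ (3*(t^2-s^2))*(s^3*t^3) := mul_le_mul_of_nonneg_right (by linarith) (by positivity)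
      _ = (3 * -(s^2 - t^2)) * (s^3*t^3) := by ring
  calc (s^3)⁻¹ - (t^3)⁻¹ = (t^3 - s^3)/(s^3*t^3) := key
    _ ≤ (3 * -(s^2 - t^2)) / r^5 := by
        rw [div_le_div_iff₀ (by positivity) (by positivity)]; exact main
    _ = 3 / r^5 * -(s^2 - t^2) := by ring

lemma rpow_neg_three_halves (Q : ℝ) (hQ : 0 < Q) : Q ^ (-(3/2):ℝ) = ((Real.sqrt Q)^3)⁻¹ := by
  rw [Real.rpow_neg hQ.le]
  congr 1
  rw [Real.sqrt_eq_rpow, ← Real.rpow_natCast (Q ^ ((1:ℝ)/2)) 3, ← Real.rpow_mul hQ.le]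
  norm_num

/-- Hölder continuity of `L(u, x) = ⟨x, G(u) x⟩^{-3/2}` in the first variable:
`|L(v, v-w) - L(u, v-w)| ≤ C |u-v|^{3α/4} / |v-w|³`. -/
theorem L_first_variable_Holder (α M lam Lam : ℝ) (hα0 : 0 < α) (hα1 : α ≤ 1)
    (hlam : 0 < lam)
    (G : EuclideanSpace ℝ (Fin 2) → Matrix (Fin 2) (Fin 2) ℝ)
    (hsymm : ∀ u, (G u).IsSymm)
    (hHolder : ∀ u v i j, |G u i j - G v i j| ≤ M * ‖u - v‖ ^ α)
    (hbound : ∀ u (x : EuclideanSpace ℝ (Fin 2)),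
        lam * ‖x‖ ^ 2 ≤ ∑ i, ∑ j, G u i j * x i * x j ∧
        (∑ i, ∑ j, G u i j * x i * x j) ≤ Lam * ‖x‖ ^ 2) :
    ∃ C : ℝ, 0 < C ∧ ∀ u v w : EuclideanSpace ℝ (Fin 2), v ≠ w →
      |(∑ i, ∑ j, G v i j * (v - w) i * (v - w) j) ^ (-(3 / 2) : ℝ) -
        (∑ i, ∑ j, G u i j * (v - w) i * (v - w) j) ^ (-(3 / 2) : ℝ)| ≤
        C * ‖u - v‖ ^ (3 * α / 4) / ‖v - w‖ ^ (3 : ℝ) := by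
  have hr0 : 0 < Real.sqrt lam := Real.sqrt_pos.2 hlam
  set r0 := Real.sqrt lam with hr0def
  refine ⟨6 * |M| / r0^5 + 2/r0^3 + 1, by positivity, ?_⟩
  intro u v w hvw
  set x : EuclideanSpace ℝ (Fin 2) := v - w with hxdef
  have hx0 : x ≠ 0 := sub_ne_zero.2 hvw
  have hxn : 0 < ‖x‖ := norm_pos_iff.2 hx0
  set Qv := ∑ i, ∑ j, G v i j * x i * x j with hQvdef
  set Qu := ∑ i, ∑ j, G u i j * x i * x j with hQudef
  have hlv : lam * ‖x‖^2 ≤ Qv := (hbound v x).1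
  have hlu : lam * ‖x‖^2 ≤ Qu := (hbound u x).1
  have hc : 0 < lam*‖x‖^2 := by positivity
  have hQv0 : 0 < Qv := lt_of_lt_of_le hc hlv
  have hQu0 : 0 < Qu := lt_of_lt_of_le hc hlu
  have hnormsq : ‖x‖^2 = x 0^2 + x 1^2 := by
    rw [EuclideanSpace.norm_eq, Real.sq_sqrt (by positivity)]
    simp [Fin.sum_univ_two, sq_abs]
  have hτ0 : (0:ℝ) ≤ ‖u - v‖ := norm_nonneg _
  have hdiff : |Qv - Qu| ≤ 2 * (|M| * ‖u-v‖ ^ α) * ‖x‖ ^ 2 := by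
    have hMabs : ∀ i j, |G v i j - G u i j| ≤ |M| * ‖u-v‖^α := by
      intro i j
      refine (hHolder v u i j).trans ?_
      rw [norm_sub_rev]
      exact mul_le_mul_of_nonneg_right (le_abs_self M) (by positivity)
    have hsplit : Qv - Qu = (G v 0 0 - G u 0 0) * x 0 * x 0 + (G v 0 1 - G u 0 1) * x 0 * x 1
        + ((G v 1 0 - G u 1 0) * x 1 * x 0 + (G v 1 1 - G u 1 1) * x 1 * x 1) := by
      rw [hQvdef, hQudef]
      simp [Fin.sum_univ_two]; ring
    rw [hsplit, hnormsq]
    exact quad_diff_bound _ _ _ _ _ _ _ (hMabs 0 0) (hMabs 0 1) (hMabs 1 0) (hMabs 1 1)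
  rw [rpow_neg_three_halves Qv hQv0, rpow_neg_three_halves Qu hQu0]
  have hr : 0 < r0*‖x‖ := by positivity
  have hrsqrt : r0*‖x‖ = Real.sqrt (lam*‖x‖^2) := by
    rw [Real.sqrt_mul hlam.le, Real.sqrt_sq hxn.le]
  have hsge : r0*‖x‖ ≤ Real.sqrt Qv := by rw [hrsqrt]; exact Real.sqrt_le_sqrt hlv
  have htge : r0*‖x‖ ≤ Real.sqrt Qu := by rw [hrsqrt]; exact Real.sqrt_le_sqrt hlu
  have hmain := inv_cube_diff (r0*‖x‖) (Real.sqrt Qv) (Real.sqrt Qu) hr hsge htge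
  rw [Real.sq_sqrt hQv0.le, Real.sq_sqrt hQu0.le] at hmain
  rw [show ((3:ℝ)) = ((3:ℕ):ℝ) by norm_num, Real.rpow_natCast]
  have hexp0 : (0:ℝ) < 3*α/4 := by linarith
  rcases eq_or_lt_of_le hτ0 with h0 | hτpos
  · -- u = v
    have huv : u = v := sub_eq_zero.1 (norm_eq_zero.1 h0.symm)
    have hQQ : Qu = Qv := by rw [hQudef, hQvdef, huv]
    rw [hQQ, sub_self, abs_zero]
    positivity
  have hr0' : r0 ≠ 0 := ne_of_gt hr0
  have hxn' : ‖x‖ ≠ 0 := ne_of_gt hxn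
  have hτβ : (0:ℝ) ≤ ‖u-v‖^(3*α/4) := Real.rpow_nonneg hτ0 _
  have hCmono : 6 * |M| / r0^5 * ‖u-v‖^(3*α/4) ≤
      (6 * |M| / r0^5 + 2/r0^3 + 1) * ‖u - v‖ ^ (3 * α / 4) := by
    have h2 : (0:ℝ) ≤ 2/r0^3 := by positivity
    exact mul_le_mul_of_nonneg_right (by linarith) hτβ
  rcases le_or_gt ‖u - v‖ 1 with hτ1 | hτ1
  · -- small increment
    have hτα : ‖u-v‖^α ≤ ‖u-v‖^(3*α/4) :=
      Real.rpow_le_rpow_of_exponent_ge hτpos hτ1 (by linarith)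
    have hdiff2 : |Qv - Qu| ≤ 2 * (|M| * ‖u-v‖ ^ (3*α/4)) * ‖x‖ ^ 2 := by
      refine hdiff.trans ?_
      have : |M| * ‖u-v‖ ^ α ≤ |M| * ‖u-v‖ ^ (3*α/4) :=
        mul_le_mul_of_nonneg_left hτα (abs_nonneg M)
      nlinarith [sq_nonneg ‖x‖]
    calc |((Real.sqrt Qv)^3)⁻¹ - ((Real.sqrt Qu)^3)⁻¹|
        ≤ 3/(r0*‖x‖)^5 * |Qv - Qu| := hmain
      _ ≤ 3/(r0*‖x‖)^5 * (2 * (|M| * ‖u-v‖ ^ (3*α/4)) * ‖x‖ ^ 2) :=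
          mul_le_mul_of_nonneg_left hdiff2 (by positivity)
      _ = (6 * |M| / r0^5 * ‖u-v‖^(3*α/4)) / ‖x‖^3 := by
          field_simp; ring
      _ ≤ (6 * |M| / r0^5 + 2/r0^3 + 1) * ‖u - v‖ ^ (3 * α / 4) / ‖x‖^3 :=
          div_le_div_of_nonneg_right hCmono (by positivity)
  · -- large increment
    have h1β : 1 ≤ ‖u-v‖^(3*α/4) := Real.one_le_rpow hτ1.le hexp0.le
    have hbv : ((Real.sqrt Qv)^3)⁻¹ ≤ ((r0*‖x‖)^3)⁻¹ :=
      inv_anti₀ (by positivity) (pow_le_pow_left₀ hr.le hsge 3)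
    have hbu : ((Real.sqrt Qu)^3)⁻¹ ≤ ((r0*‖x‖)^3)⁻¹ :=
      inv_anti₀ (by positivity) (pow_le_pow_left₀ hr.le htge 3)
    have hAv : 0 < ((Real.sqrt Qv)^3)⁻¹ := by
      have : (0:ℝ) < Real.sqrt Qv := Real.sqrt_pos.2 hQv0
      positivity
    have hAu : 0 < ((Real.sqrt Qu)^3)⁻¹ := by
      have : (0:ℝ) < Real.sqrt Qu := Real.sqrt_pos.2 hQu0
      positivity
    have habs : |((Real.sqrt Qv)^3)⁻¹ - ((Real.sqrt Qu)^3)⁻¹| ≤ 2*((r0*‖x‖)^3)⁻¹ := by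
      rw [abs_sub_le_iff]
      constructor <;> linarith
    have hnum : 2/r0^3 ≤ (6 * |M| / r0^5 + 2/r0^3 + 1) * ‖u - v‖ ^ (3 * α / 4) := by
      have e1 : 2/r0^3 ≤ (2/r0^3) * ‖u-v‖^(3*α/4) :=
        le_mul_of_one_le_right (by positivity) h1β
      have e2 : (2/r0^3) * ‖u-v‖^(3*α/4) ≤ (6 * |M| / r0^5 + 2/r0^3 + 1) * ‖u - v‖ ^ (3 * α / 4) :=
        mul_le_mul_of_nonneg_right
          (by
            have h6 : (0:ℝ) ≤ 6 * |M| / r0^5 := by positivity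
            linarith) hτβ
      linarith
    calc |((Real.sqrt Qv)^3)⁻¹ - ((Real.sqrt Qu)^3)⁻¹|
        ≤ 2*((r0*‖x‖)^3)⁻¹ := habs
      _ = (2/r0^3) / ‖x‖^3 := by field_simp
      _ ≤ (6 * |M| / r0^5 + 2/r0^3 + 1) * ‖u - v‖ ^ (3 * α / 4) / ‖x‖^3 :=
          div_le_div_of_nonneg_right hnum (by positivity)
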